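/- Monotonicity for individual candidates: assume all candidates have capacity m_i = 1. Fix a candidate i and a second approval profile (A'_k) on the same vote types with the same weights v_k, such that A'_k \ {i} = A_k \ {i} for every k (no candidate other than i gains or loses approvals), A_k ⊆ A'_k for every k, and i ∈ A'_k \ A_k for at least one k with v_k > 0 (so the support of i strictly increases while every other candidate's support is unchanged). If some execution of the Eneström–Phragmén procedure on the profile (A_k) elects i, then there exists an execution of the procedure on the profile (A'_k) that elects i. -/
import Mathlib


/-!
The Eneström–Phragmén procedure.

We fix a number of seats `n ≥ 1`, a finite set `ι` of candidates with capacities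
`m i ∈ ℕ∞`, a finite set `κ` of vote types, and for each vote type a positive weight
`v k` and a nonempty approval set `A k`.  The total vote is `V = ∑ k, v k` and the
(Droop) quota is `q = V / (n + 1)`.  An execution of the procedure is recorded by the
vote weights `vk s k` at each step `s`, the seat counts `seats s i`, and the candidate
`winner s` receiving seat `s + 1` (for `s < n`), subject to the rules of the procedure.
-/

namespace EP

/-- The data of an Eneström–Phragmén election. -/
structure Input (ι κ : Type*) [Fintype ι] [DecidableEq ι] [Fintype κ] : Type _ where
  /-- number of seats -/
  n : ℕ
  hn : 1 ≤ n
  /-- capacities of the candidates -/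
  m : ι → ℕ∞
  /-- weights of the vote types -/
  v : κ → ℝ
  hv : ∀ k, 0 < v k
  /-- approval sets of the vote types -/
  A : κ → Finset ι
  hA : ∀ k, (A k).Nonempty

namespace Input

variable {ι κ : Type*} [Fintype ι] [DecidableEq ι] [Fintype κ] (P : Input ι κ)

/-- Total number of votes. -/
noncomputable def V : ℝ := ∑ k, P.v k

/-- The Droop quota `q = v / (n + 1)`. -/
noncomputable def q : ℝ := P.V / (P.n + 1)

/-- Support of candidate `i` given current vote weights `u`:
`w_i = ∑_{k : i ∈ A_k} u_k`. -/
noncomputable def supp (u : κ → ℝ) (i : ι) : ℝ :=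
  ∑ k ∈ Finset.univ.filter (fun k => i ∈ P.A k), u k

/-- Standing assumption: at least `n` candidates have positive initial support. -/
def enough : Prop := P.n ≤ {i : ι | 0 < P.supp P.v i}.ncard

end Input

/-- An execution of the Eneström–Phragmén procedure: at each step `s < n`,
seat `s + 1` is given to an eligible candidate `winner s` of maximal support, and the
votes approving the winner are reduced according to the quota rule. -/
structure Exec {ι κ : Type*} [Fintype ι] [DecidableEq ι] [Fintype κ]
    (P : Input ι κ) : Type _ where
  /-- the vote weights `v_k[s]` -/
  vk : ℕ → κ → ℝ
  /-- the seat counts `n_i[s]` -/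
  seats : ℕ → ι → ℕ
  /-- the candidate receiving seat `s + 1` -/
  winner : ℕ → ι
  vk_init : vk 0 = P.v
  seats_init : ∀ i, seats 0 i = 0
  /-- the winner is eligible -/
  winner_elig : ∀ s < P.n, (seats s (winner s) : ℕ∞) < P.m (winner s)
  /-- the winner maximizes the support among eligible candidates -/
  winner_max : ∀ s < P.n, ∀ i : ι, (seats s i : ℕ∞) < P.m i →
    P.supp (vk s) i ≤ P.supp (vk s) (winner s)
  seats_succ : ∀ s < P.n, ∀ i : ι,
    seats (s + 1) i = if i = winner s then seats s i + 1 else seats s i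
  /-- vote reduction when the winner has at least a quota -/
  vk_succ_ge : ∀ s < P.n, ∀ k, winner s ∈ P.A k → P.q ≤ P.supp (vk s) (winner s) →
    vk (s + 1) k = (1 - P.q / P.supp (vk s) (winner s)) * vk s k
  /-- vote exhaustion when the winner has less than a quota -/
  vk_succ_lt : ∀ s < P.n, ∀ k, winner s ∈ P.A k → P.supp (vk s) (winner s) < P.q →
    vk (s + 1) k = 0
  /-- votes not approving the winner are unchanged -/
  vk_succ_out : ∀ s < P.n, ∀ k, winner s ∉ P.A k → vk (s + 1) k = vk s k

end EP


namespace EP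

section Aux

open Classical

variable {ι κ : Type*} [Fintype ι] [DecidableEq ι] [Fintype κ]

/-- Choose a maximizer of `P'.supp st.1` among unseated candidates (default `d`). -/
noncomputable def argmaxElig (P' : Input ι κ) (st : (κ → ℝ) × (ι → ℕ)) (d : ι) : ι :=
  if h : (Finset.univ.filter fun j => st.2 j = 0).Nonempty then
    ((Finset.univ.filter fun j => st.2 j = 0).exists_max_image (P'.supp st.1) h).choose
  else d

/-- The winner chosen at step `s` in the constructed execution. -/
noncomputable def pick (P' : Input ι κ) (i : ι) {P : Input ι κ} (E : Exec P) (t : ℕ)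
    (s : ℕ) (st : (κ → ℝ) × (ι → ℕ)) : ι :=
  if st.2 i = 0 ∧ s ≤ t then
    (if ∀ j, st.2 j = 0 → P'.supp st.1 j ≤ P'.supp st.1 i then i else E.winner s)
  else argmaxElig P' st i

/-- One step of the procedure with winner `w`. -/
noncomputable def trans (P' : Input ι κ) (w : ι) (st : (κ → ℝ) × (ι → ℕ)) :
    (κ → ℝ) × (ι → ℕ) :=
  (fun k => if w ∈ P'.A k then
      (if P'.q ≤ P'.supp st.1 w then (1 - P'.q / P'.supp st.1 w) * st.1 k else 0)
    else st.1 k,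
   fun j => if j = w then st.2 j + 1 else st.2 j)

/-- The constructed state sequence. -/
noncomputable def state (P' : Input ι κ) (i : ι) {P : Input ι κ} (E : Exec P) (t : ℕ) :
    ℕ → (κ → ℝ) × (ι → ℕ)
  | 0 => (P'.v, fun _ => 0)
  | s + 1 => trans P' (pick P' i E t s (state P' i E t s)) (state P' i E t s)

end Aux

end EP

open EP in
/-- monotonicity for individual candidates: assume all capacities are
one.  Let `P'` be a second profile on the same vote types with the same number of seats
and the same weights, in which no candidate other than `i` gains or loses approvals
(`A'_k \ {i} = A_k \ {i}`), every approval set only grows (`A_k ⊆ A'_k`), and `i` gains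
the approval of at least one vote type (all of which have positive weight).  If some
execution on `P` elects `i`, then some execution on `P'` elects `i`. -/
theorem enestrom_phragmen_monotonicity_individual
    {ι κ : Type*} [Fintype ι] [DecidableEq ι] [Fintype κ]
    (P P' : Input ι κ) (i : ι)
    (hn : P'.n = P.n)
    (hm : ∀ j, P.m j = 1) (hm' : ∀ j, P'.m j = 1)
    (hv : P'.v = P.v)
    (hsub : ∀ k, P.A k ⊆ P'.A k)
    (hother : ∀ k, (P.A k).erase i = (P'.A k).erase i)
    (hstrict : ∃ k, i ∈ P'.A k ∧ i ∉ P.A k)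
    (henough : P.enough) (henough' : P'.enough)
    (E : Exec P) (hi : E.seats P.n i = 1) :
    ∃ E' : Exec P', E'.seats P'.n i = 1 := by
  classical
  -- Basic facts about `P`.
  have hm1 : ∀ c : ℕ, ((c : ℕ∞) < 1 ↔ c = 0) := fun c => by exact_mod_cast Nat.lt_one_iff
  have hV : 0 < P.V := by
    obtain ⟨j, hj⟩ : {j : ι | 0 < P.supp P.v j}.Nonempty := by
      rw [Set.nonempty_iff_ne_empty]
      intro he
      have h2 := henough
      rw [Input.enough, he, Set.ncard_empty] at h2
      have := P.hn
      omega
    calc (0:ℝ) < P.supp P.v j := hj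
      _ ≤ P.V := Finset.sum_le_sum_of_subset_of_nonneg (Finset.filter_subset _ _)
          (fun k _ _ => (P.hv k).le)
  have hq0 : 0 < P.q := div_pos hV (by positivity)
  have hnn : ∀ s, s ≤ P.n → ∀ k, 0 ≤ E.vk s k := by
    intro s
    induction s with
    | zero => intro _ k; rw [E.vk_init]; exact (P.hv k).le
    | succ s ih =>
      intro hs k
      have hs' : s < P.n := hs
      by_cases hk : E.winner s ∈ P.A k
      · rcases le_or_gt P.q (P.supp (E.vk s) (E.winner s)) with hge | hlt
        · rw [E.vk_succ_ge s hs' k hk hge]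
          have hw0 : 0 < P.supp (E.vk s) (E.winner s) := lt_of_lt_of_le hq0 hge
          have hd1 : P.q / P.supp (E.vk s) (E.winner s) ≤ 1 := (div_le_one hw0).mpr hge
          exact mul_nonneg (by linarith) (ih hs'.le k)
        · rw [E.vk_succ_lt s hs' k hk hlt]
      · rw [E.vk_succ_out s hs' k hk]; exact ih hs'.le k
  have hq : P'.q = P.q := by
    unfold Input.q Input.V
    rw [hv, hn]
  have hmemA : ∀ k, ∀ j, j ≠ i → (j ∈ P'.A k ↔ j ∈ P.A k) := by
    intro k j hj
    constructor
    · intro h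
      have h2 : j ∈ (P'.A k).erase i := Finset.mem_erase.mpr ⟨hj, h⟩
      rw [← hother k] at h2
      exact (Finset.mem_erase.mp h2).2
    · exact fun h => hsub k h
  have hsuppeq : ∀ (u : κ → ℝ) j, j ≠ i → P'.supp u j = P.supp u j := by
    intro u j hj
    unfold Input.supp
    congr 1
    ext k
    simp [hmemA k j hj]
  have hsuppmono : ∀ (u : κ → ℝ), (∀ k, 0 ≤ u k) → P.supp u i ≤ P'.supp u i := by
    intro u hu
    unfold Input.supp
    apply Finset.sum_le_sum_of_subset_of_nonneg
    · intro k hk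
      simp only [Finset.mem_filter, Finset.mem_univ, true_and] at *
      exact hsub k hk
    · exact fun k _ _ => hu k
  have hncard : P.n ≤ Fintype.card ι := by
    refine le_trans henough ?_
    calc {j : ι | 0 < P.supp P.v j}.ncard ≤ (Set.univ : Set ι).ncard :=
          Set.ncard_le_ncard (Set.subset_univ _) Set.finite_univ
      _ = Fintype.card ι := by rw [Set.ncard_univ, Nat.card_eq_fintype_card]
  -- The step `t` at which `E` elects `i`.
  have hex : ∃ s, s < P.n ∧ E.winner s = i := by
    by_contra h
    push_neg at h
    have hz : ∀ s, s ≤ P.n → E.seats s i = 0 := by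
      intro s
      induction s with
      | zero => intro _; exact E.seats_init i
      | succ s ih =>
        intro hs
        have hs' : s < P.n := hs
        rw [E.seats_succ s hs' i, if_neg (fun he => h s hs' he.symm), ih hs'.le]
    have := hz P.n le_rfl
    rw [hi] at this
    omega
  set t := Nat.find hex with htdef
  have ht : t < P.n ∧ E.winner t = i := Nat.find_spec hex
  have htlt : ∀ s, s < t → E.winner s ≠ i := by
    intro s hs he
    exact Nat.find_min hex hs ⟨lt_trans hs ht.1, he⟩
  -- at step `t` in a synced state, `i` has maximal support in `P'`
  have hmax_at_t : ∀ s, (state P' i E t s).1 = E.vk s → (state P' i E t s).2 = E.seats s →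
      s = t → ∀ j, (state P' i E t s).2 j = 0 →
      P'.supp (state P' i E t s).1 j ≤ P'.supp (state P' i E t s).1 i := by
    intro s hvk hse hst j hj
    by_cases hji : j = i
    · rw [hji]
    · have hjE : E.seats s j = 0 := by rw [← hse]; exact hj
      have helig : (E.seats s j : ℕ∞) < P.m j := by
        rw [hjE, hm j]
        exact (hm1 0).mpr rfl
      have hsn : s < P.n := hst ▸ ht.1
      have h1 : P.supp (E.vk s) j ≤ P.supp (E.vk s) (E.winner s) := E.winner_max s hsn j helig
      have h2 : E.winner s = i := hst ▸ ht.2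
      rw [h2] at h1
      calc P'.supp (state P' i E t s).1 j = P.supp (E.vk s) j := by
            rw [hvk, hsuppeq _ j hji]
        _ ≤ P.supp (E.vk s) i := h1
        _ ≤ P'.supp (E.vk s) i := hsuppmono _ (hnn s hsn.le)
        _ = P'.supp (state P' i E t s).1 i := by rw [hvk]
  -- The main invariant.
  have hInv : ∀ s, ((state P' i E t s).2 i = 0 →
      s ≤ t ∧ (state P' i E t s).1 = E.vk s ∧ (state P' i E t s).2 = E.seats s) ∧
      (Finset.univ.filter fun j => ¬ (state P' i E t s).2 j = 0).card ≤ s := by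
    intro s
    induction s with
    | zero =>
      refine ⟨fun _ => ⟨Nat.zero_le t, ?_, ?_⟩, ?_⟩
      · rw [E.vk_init]; exact hv
      · funext j
        rw [E.seats_init j]
        rfl
      · simp [state]
    | succ s ih =>
      obtain ⟨ih1, ih2⟩ := ih
      set w := pick P' i E t s (state P' i E t s) with hw
      have hstep : state P' i E t (s+1) = trans P' w (state P' i E t s) := rfl
      constructor
      · intro h0
        rw [hstep] at h0
        simp only [EP.trans] at h0
        have hne : ¬ i = w := by
          intro he
          rw [if_pos he] at h0
          omega
        rw [if_neg hne] at h0
        obtain ⟨hst, hvk, hse⟩ := ih1 h0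
        have hcond : (state P' i E t s).2 i = 0 ∧ s ≤ t := ⟨h0, hst⟩
        have hwdef : w = if (∀ j, (state P' i E t s).2 j = 0 →
            P'.supp (state P' i E t s).1 j ≤ P'.supp (state P' i E t s).1 i) then i
            else E.winner s := by
          rw [hw]; simp only [pick]; rw [if_pos hcond]
        have hnmax : ¬ (∀ j, (state P' i E t s).2 j = 0 →
            P'.supp (state P' i E t s).1 j ≤ P'.supp (state P' i E t s).1 i) := by
          intro hmax
          rw [hwdef, if_pos hmax] at hne
          exact hne rfl
        have hwE : w = E.winner s := by rw [hwdef, if_neg hnmax]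
        have hslt : s < t := by
          rcases lt_or_eq_of_le hst with h | h
          · exact h
          · exact absurd (hmax_at_t s hvk hse h) hnmax
        have hsn : s < P.n := lt_trans hslt ht.1
        have hwne : w ≠ i := by rw [hwE]; exact htlt s hslt
        refine ⟨hslt, ?_, ?_⟩
        · funext k
          rw [hstep]
          simp only [EP.trans]
          have hsuppw : P'.supp (state P' i E t s).1 w = P.supp (E.vk s) w := by
            rw [hvk, hsuppeq _ w hwne]
          rw [hsuppw, hq, hvk]
          by_cases hk : w ∈ P.A k
          · rw [if_pos (show w ∈ P'.A k from (hmemA k w hwne).mpr hk)]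
            rw [hwE] at hk ⊢
            rcases le_or_gt P.q (P.supp (E.vk s) (E.winner s)) with hge | hlt
            · rw [if_pos hge, E.vk_succ_ge s hsn k hk hge]
            · rw [if_neg (not_le.mpr hlt), E.vk_succ_lt s hsn k hk hlt]
          · rw [if_neg (show w ∉ P'.A k from fun h => hk ((hmemA k w hwne).mp h))]
            rw [hwE] at hk
            rw [E.vk_succ_out s hsn k hk]
        · funext j
          rw [hstep]
          simp only [EP.trans]
          rw [hse, hwE, E.seats_succ s hsn j]
      · rw [hstep]
        simp only [EP.trans]
        have hsub2 : (Finset.univ.filter fun j =>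
              ¬ (if j = w then (state P' i E t s).2 j + 1 else (state P' i E t s).2 j) = 0) ⊆
            insert w (Finset.univ.filter fun j => ¬ (state P' i E t s).2 j = 0) := by
          intro j hj
          simp only [Finset.mem_filter, Finset.mem_insert, Finset.mem_univ, true_and] at *
          by_cases hjw : j = w
          · exact Or.inl hjw
          · rw [if_neg hjw] at hj
            exact Or.inr hj
        calc (Finset.univ.filter fun j =>
              ¬ (if j = w then (state P' i E t s).2 j + 1 else (state P' i E t s).2 j) = 0).card
            ≤ (insert w (Finset.univ.filter fun j => ¬ (state P' i E t s).2 j = 0)).card :=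
              Finset.card_le_card hsub2
          _ ≤ (Finset.univ.filter fun j => ¬ (state P' i E t s).2 j = 0).card + 1 :=
              Finset.card_insert_le _ _
          _ ≤ s + 1 := by omega
  -- eligible candidates exist at every step `s < n`
  have heligne : ∀ s, s < P.n → (Finset.univ.filter fun j => (state P' i E t s).2 j = 0).Nonempty := by
    intro s hs
    rw [← Finset.card_pos]
    have h1 := Finset.card_filter_add_card_filter_not
      (s := (Finset.univ : Finset ι)) (p := fun j => (state P' i E t s).2 j = 0)
    have h2 := (hInv s).2
    have h3 : (Finset.univ : Finset ι).card = Fintype.card ι := Finset.card_univ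
    omega
  -- the picked winner is unseated
  have hwelig : ∀ s, s < P.n → (state P' i E t s).2 (pick P' i E t s (state P' i E t s)) = 0 := by
    intro s hs
    simp only [pick]
    by_cases hcond : (state P' i E t s).2 i = 0 ∧ s ≤ t
    · rw [if_pos hcond]
      by_cases hmax : ∀ j, (state P' i E t s).2 j = 0 →
          P'.supp (state P' i E t s).1 j ≤ P'.supp (state P' i E t s).1 i
      · rw [if_pos hmax]; exact hcond.1
      · rw [if_neg hmax]
        obtain ⟨hst, hvk, hse⟩ := (hInv s).1 hcond.1
        have h2 := E.winner_elig s hs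
        rw [hm _] at h2
        rw [hse]
        exact (hm1 _).mp h2
    · rw [if_neg hcond]
      simp only [argmaxElig]
      rw [dif_pos (heligne s hs)]
      have hmem := ((Finset.univ.filter fun j => (state P' i E t s).2 j = 0).exists_max_image
        (P'.supp (state P' i E t s).1) (heligne s hs)).choose_spec.1
      simpa using hmem
  -- the picked winner has maximal support among unseated candidates
  have hwmax : ∀ s, s < P.n → ∀ j, (state P' i E t s).2 j = 0 →
      P'.supp (state P' i E t s).1 j ≤
        P'.supp (state P' i E t s).1 (pick P' i E t s (state P' i E t s)) := by
    intro s hs j hj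
    simp only [pick]
    by_cases hcond : (state P' i E t s).2 i = 0 ∧ s ≤ t
    · rw [if_pos hcond]
      by_cases hmax : ∀ j, (state P' i E t s).2 j = 0 →
          P'.supp (state P' i E t s).1 j ≤ P'.supp (state P' i E t s).1 i
      · rw [if_pos hmax]; exact hmax j hj
      · rw [if_neg hmax]
        obtain ⟨hst, hvk, hse⟩ := (hInv s).1 hcond.1
        have hslt : s < t := by
          rcases lt_or_eq_of_le hst with h | h
          · exact h
          · exact absurd (hmax_at_t s hvk hse h) hmax
        have hwne : E.winner s ≠ i := htlt s hslt
        have hwsupp : P'.supp (state P' i E t s).1 (E.winner s) =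
            P.supp (E.vk s) (E.winner s) := by rw [hvk, hsuppeq _ _ hwne]
        have hub : ∀ j', (state P' i E t s).2 j' = 0 → j' ≠ i →
            P'.supp (state P' i E t s).1 j' ≤ P'.supp (state P' i E t s).1 (E.winner s) := by
          intro j' hj' hj'i
          have hjE : E.seats s j' = 0 := by rw [← hse]; exact hj'
          have helig : (E.seats s j' : ℕ∞) < P.m j' := by
            rw [hjE, hm j']
            exact (hm1 0).mpr rfl
          have h1 := E.winner_max s hs j' helig
          rw [hwsupp, hvk, hsuppeq _ j' hj'i]
          exact h1
        by_cases hji : j = i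
        · push_neg at hmax
          obtain ⟨j0, hj0, hlt0⟩ := hmax
          have hj0i : j0 ≠ i := by
            intro he
            rw [he] at hlt0
            exact lt_irrefl _ hlt0
          rw [hji]
          exact le_of_lt (lt_of_lt_of_le hlt0 (hub j0 hj0 hj0i))
        · exact hub j hj hji
    · rw [if_neg hcond]
      simp only [argmaxElig]
      rw [dif_pos (heligne s hs)]
      have hmem := ((Finset.univ.filter fun j => (state P' i E t s).2 j = 0).exists_max_image
        (P'.supp (state P' i E t s).1) (heligne s hs)).choose_spec.2
      exact hmem j (by simpa using hj)
  -- assemble the execution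
  have hn' : P'.n = P.n := hn
  refine ⟨⟨fun s => (state P' i E t s).1, fun s => (state P' i E t s).2,
    fun s => pick P' i E t s (state P' i E t s), rfl, fun j => rfl, ?_, ?_, ?_, ?_, ?_, ?_⟩, ?_⟩
  · intro s hs
    rw [hn'] at hs
    show ((state P' i E t s).2 (pick P' i E t s (state P' i E t s)) : ℕ∞) <
      P'.m (pick P' i E t s (state P' i E t s))
    rw [hwelig s hs, hm' _]
    exact_mod_cast (hm1 0).mpr rfl
  · intro s hs j hj
    rw [hn'] at hs
    have hj' : ((state P' i E t s).2 j : ℕ∞) < P'.m j := hj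
    rw [hm' j] at hj'
    exact hwmax s hs j ((hm1 _).mp hj')
  · intro s _ j
    rfl
  · intro s _ k hk hge
    have hk' : pick P' i E t s (state P' i E t s) ∈ P'.A k := hk
    have hge' : P'.q ≤ P'.supp (state P' i E t s).1 (pick P' i E t s (state P' i E t s)) := hge
    show (EP.trans P' (pick P' i E t s (state P' i E t s)) (state P' i E t s)).1 k =
      (1 - P'.q / P'.supp (state P' i E t s).1 (pick P' i E t s (state P' i E t s))) *
        (state P' i E t s).1 k
    simp only [EP.trans]
    rw [if_pos hk', if_pos hge']
  · intro s _ k hk hlt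
    have hk' : pick P' i E t s (state P' i E t s) ∈ P'.A k := hk
    have hlt' : P'.supp (state P' i E t s).1 (pick P' i E t s (state P' i E t s)) < P'.q := hlt
    show (EP.trans P' (pick P' i E t s (state P' i E t s)) (state P' i E t s)).1 k = 0
    simp only [EP.trans]
    rw [if_pos hk', if_neg (not_le.mpr hlt')]
  · intro s _ k hk
    have hk' : pick P' i E t s (state P' i E t s) ∉ P'.A k := hk
    show (EP.trans P' (pick P' i E t s (state P' i E t s)) (state P' i E t s)).1 k =
      (state P' i E t s).1 k
    simp only [EP.trans]
    rw [if_neg hk']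
  -- conclusion: `i` ends up with exactly one seat
  · show (state P' i E t P'.n).2 i = 1
    rw [hn']
    have hiseated : (state P' i E t (t+1)).2 i ≠ 0 := by
      intro h
      have := ((hInv (t+1)).1 h).1
      omega
    have hle1 : ∀ s, s ≤ P.n → (state P' i E t s).2 i ≤ 1 := by
      intro s
      induction s with
      | zero => intro _; exact Nat.zero_le 1
      | succ s ih =>
        intro hs
        have hs' : s < P.n := hs
        show (EP.trans P' (pick P' i E t s (state P' i E t s)) (state P' i E t s)).2 i ≤ 1
        simp only [EP.trans]
        by_cases hiw : i = pick P' i E t s (state P' i E t s)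
        · rw [if_pos hiw]
          have h0 := hwelig s hs'
          rw [← hiw] at h0
          omega
        · rw [if_neg hiw]
          exact ih hs'.le
    have hmono : ∀ a b, a ≤ b → (state P' i E t a).2 i ≤ (state P' i E t b).2 i := by
      intro a b hab
      induction b, hab using Nat.le_induction with
      | base => exact le_rfl
      | succ b hb ihb =>
        refine le_trans ihb ?_
        show _ ≤ (EP.trans P' (pick P' i E t b (state P' i E t b)) (state P' i E t b)).2 i
        simp only [EP.trans]
        by_cases hiw : i = pick P' i E t b (state P' i E t b)
        · rw [if_pos hiw]; omega
        · rw [if_neg hiw]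
    have h1 : t + 1 ≤ P.n := ht.1
    have h2 := hmono (t+1) P.n h1
    have h3 := hle1 P.n le_rfl
    omega
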